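/- Let α_1 ∈ (1/2, 1) be irrational with convergent denominators (q_k)_{k≥0}, and set α = (α_1, 1 − α_1) ∈ ℝ². Fix 1 ≤ q ≤ ∞. Then for every i ≥ 1 and every n with q_{i+1} + 1 ≤ n ≤ q_{i+2}, one has h_1(n) = q_{i+1}. -/

import Mathlib

open scoped BigOperators ENNReal NNReal

/-- Distance from a real number to the nearest integer (the torus norm on ℝ/ℤ). -/
noncomputable def nint (t : ℝ) : ℝ := |t - round t|

/-- The `L_q` distance (for `1 ≤ q ≤ ∞`) between two points of the torus `ℝ^d/ℤ^d`,
computed on representatives in `ℝ^d`. -/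
noncomputable def lqDist (q : ℝ≥0∞) {d : ℕ} (x y : Fin d → ℝ) : ℝ :=
  if q = ⊤ then ⨆ i, nint (x i - y i)
  else (∑ i, nint (x i - y i) ^ q.toReal) ^ (1 / q.toReal)

/-- The `n`-th point of the `d`-dimensional Kronecker sequence `z_n = nα + ℤ^d`
(as a representative in `ℝ^d`). -/
noncomputable def kron {d : ℕ} (α : Fin d → ℝ) (n : ℕ) : Fin d → ℝ :=
  fun c => (n : ℝ) * α c

/-- `L_q`-distance on the torus between the `i`-th and `j`-th points of the
Kronecker sequence of `α`. -/
noncomputable def kronDist (q : ℝ≥0∞) {d : ℕ} (α : Fin d → ℝ) (i j : ℕ) : ℝ :=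
  lqDist q (kron α i) (kron α j)

/-- The index `j ∈ {1, …, N} \ {i}` of the nearest neighbor of `z_i` in
`S_N = {z_1, …, z_N}` w.r.t. the `L_q` torus metric; ties are broken by taking
the largest such index. -/
noncomputable def nnIndex (q : ℝ≥0∞) {d : ℕ} (α : Fin d → ℝ) (N i : ℕ) : ℕ :=
  sSup {j : ℕ | j ∈ Finset.Icc 1 N ∧ j ≠ i ∧
    ∀ m ∈ Finset.Icc 1 N, m ≠ i → kronDist q α i j ≤ kronDist q α i m}

/-- `h_i(N) = |j - i|` where `z_j` is the nearest neighbor of `z_i` in `S_N`: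
the counting-metric distance of `z_i` to its nearest neighbor. -/
noncomputable def hFun (q : ℝ≥0∞) {d : ℕ} (α : Fin d → ℝ) (N i : ℕ) : ℕ :=
  Nat.dist (nnIndex q α N i) i

/-- `g_N(α, ℤ^d, ‖·‖_q)`: the number of distinct nearest neighbor distances
among `d_q(z_i, nn_1(z_i))`, `i = 1, …, N`. -/
noncomputable def gN (q : ℝ≥0∞) {d : ℕ} (α : Fin d → ℝ) (N : ℕ) : ℕ :=
  ((Finset.Icc 1 N).image (fun i => kronDist q α i (nnIndex q α N i))).card

/-- The Gauss map `x ↦ {1/x}` generating the continued fraction expansion. -/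
noncomputable def gaussMap (x : ℝ) : ℝ := Int.fract x⁻¹

/-- The partial quotients of the continued fraction expansion `[0; a_1, a_2, …]`
of an irrational `α ∈ (0,1)`: `a_n = ⌊1 / G^[n-1](α)⌋` (with `a_0 = 0`). -/
noncomputable def cfA (α : ℝ) : ℕ → ℕ
  | 0 => 0
  | n + 1 => (⌊(gaussMap^[n] α)⁻¹⌋).toNat

/-- The denominators of the convergents of the continued fraction of `α`:
`q_0 = 1`, `q_1 = a_1`, `q_n = a_n q_{n-1} + q_{n-2}`. -/
noncomputable def cfQ (α : ℝ) : ℕ → ℕ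
  | 0 => 1
  | 1 => cfA α 1
  | n + 2 => cfA α (n + 2) * cfQ α (n + 1) + cfQ α n

lemma nint_nonneg (t : ℝ) : 0 ≤ nint t := abs_nonneg _
lemma nint_le (t : ℝ) (l : ℤ) : nint t ≤ |t - l| := by
  rcases eq_or_ne l (round t) with h | h
  · simp [nint, h]
  · have h1 : |t - round t| ≤ 1/2 := abs_sub_round t
    have h2 : (1 : ℝ) ≤ |(l : ℝ) - round t| := by
      have h3 : (1:ℤ) ≤ |l - round t| := Int.one_le_abs (sub_ne_zero.mpr h)
      calc (1:ℝ) = ((1:ℤ):ℝ) := by norm_num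
        _ ≤ ((|l - round t| : ℤ) : ℝ) := by exact_mod_cast h3
        _ = |(l:ℝ) - round t| := by push_cast; ring_nf
    have h4 : |(l:ℝ) - round t| ≤ |(l:ℝ) - t| + |t - round t| := abs_sub_le _ _ _
    have h5 : |t - l| = |(l:ℝ) - t| := abs_sub_comm _ _
    rw [nint]; linarith
lemma nint_add_int (t : ℝ) (k : ℤ) : nint (t + k) = nint t := by
  simp only [nint, round_add_intCast]
  congr 1
  push_cast
  ring
lemma nint_neg (t : ℝ) : nint (-t) = nint t := by
  have h : ∀ s : ℝ, nint (-s) ≤ nint s := by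
    intro s
    calc nint (-s) ≤ |(-s) - ((-round s : ℤ) : ℝ)| := nint_le (-s) (-round s)
      _ = |s - round s| := by push_cast; rw [← abs_neg]; ring_nf
      _ = nint s := rfl
  exact le_antisymm (h t) (by simpa using h (-t))

section CF
variable (α : ℝ)
noncomputable def tt (k : ℕ) : ℝ := gaussMap^[k] α
lemma tt_succ (k : ℕ) : tt α (k+1) = Int.fract (tt α k)⁻¹ := by
  rw [tt, Function.iterate_succ_apply']; rfl

noncomputable def cfP (α : ℝ) : ℕ → ℕ
  | 0 => 0
  | 1 => 1
  | n + 2 => cfA α (n + 2) * cfP α (n + 1) + cfP α n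

noncomputable def PP (k : ℕ) : ℝ := ∏ j ∈ Finset.range (k+1), tt α j

variable (h0 : 0 < α) (h1 : α < 1) (hirr : Irrational α)
include h0 h1 hirr

lemma tt_good : ∀ k, Irrational (tt α k) ∧ 0 < tt α k ∧ tt α k < 1 := by
  intro k; induction k with
  | zero => exact ⟨hirr, h0, h1⟩
  | succ k ih =>
    obtain ⟨hi, hp, hl⟩ := ih
    rw [tt_succ]
    have hfr : Irrational (Int.fract (tt α k)⁻¹) := by
      rw [Int.fract]; exact hi.inv.sub_intCast _
    refine ⟨hfr, ?_, Int.fract_lt_one _⟩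
    rcases lt_or_eq_of_le (Int.fract_nonneg (tt α k)⁻¹) with h | h
    · exact h
    · exact absurd (h ▸ hfr) (by simp)

lemma one_lt_tt_inv (k : ℕ) : 1 < (tt α k)⁻¹ := by
  obtain ⟨_, hp, hl⟩ := tt_good α h0 h1 hirr k
  rw [lt_inv_comm₀ one_pos hp]; simpa

lemma cfA_eq (k : ℕ) : (cfA α (k+1) : ℝ) = (tt α k)⁻¹ - tt α (k+1) := by
  have hfl : (1:ℤ) ≤ ⌊(tt α k)⁻¹⌋ := by
    have := one_lt_tt_inv α h0 h1 hirr k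
    exact Int.le_floor.mpr (by exact_mod_cast this.le)
  have hdef : cfA α (k+1) = (⌊(tt α k)⁻¹⌋).toNat := rfl
  rw [hdef, tt_succ, Int.fract]
  have : ((⌊(tt α k)⁻¹⌋.toNat : ℤ) : ℝ) = ((⌊(tt α k)⁻¹⌋ : ℤ) : ℝ) := by
    congr 1; omega
  push_cast at this ⊢
  linarith [this]

lemma cfA_pos (k : ℕ) : 1 ≤ cfA α (k+1) := by
  have hfl : (1:ℤ) ≤ ⌊(tt α k)⁻¹⌋ :=
    Int.le_floor.mpr (by exact_mod_cast (one_lt_tt_inv α h0 h1 hirr k).le)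
  have hdef : cfA α (k+1) = (⌊(tt α k)⁻¹⌋).toNat := rfl
  omega

lemma key_a (k : ℕ) : (cfA α (k+1) : ℝ) * tt α k = 1 - tt α k * tt α (k+1) := by
  have h := cfA_eq α h0 h1 hirr k
  have hp : tt α k ≠ 0 := (tt_good α h0 h1 hirr k).2.1.ne'
  rw [h, sub_mul, inv_mul_cancel₀ hp]; ring

lemma PP_pos (k : ℕ) : 0 < PP α k :=
  Finset.prod_pos fun j _ => (tt_good α h0 h1 hirr j).2.1

lemma key (k : ℕ) : (cfQ α k : ℝ) * α - (cfP α k : ℝ) = (-1)^k * PP α k := by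
  have main : ∀ k, ((cfQ α k : ℝ) * α - (cfP α k : ℝ) = (-1)^k * PP α k) ∧
      ((cfQ α (k+1) : ℝ) * α - (cfP α (k+1) : ℝ) = (-1)^(k+1) * PP α (k+1)) := by
    intro k; induction k with
    | zero =>
      constructor
      · show ((1:ℕ):ℝ) * α - ((0:ℕ):ℝ) = _
        simp [PP, Finset.prod_range_succ, tt]
      · show ((cfA α 1 : ℕ):ℝ) * α - ((1:ℕ):ℝ) = _
        have ha := key_a α h0 h1 hirr 0
        have ht0 : tt α 0 = α := rfl
        rw [ht0] at ha
        simp only [PP]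
        rw [Finset.prod_range_succ, Finset.prod_range_one]
        rw [ht0]
        push_cast
        linarith [ha]
    | succ k ih =>
      obtain ⟨ih1, ih2⟩ := ih
      refine ⟨ih2, ?_⟩
      have hq : (cfQ α (k+2) : ℝ) = (cfA α (k+2) : ℝ) * cfQ α (k+1) + cfQ α k := by
        show ((cfA α (k+2) * cfQ α (k+1) + cfQ α k : ℕ) : ℝ) = _
        push_cast; ring
      have hp : (cfP α (k+2) : ℝ) = (cfA α (k+2) : ℝ) * cfP α (k+1) + cfP α k := by
        show ((cfA α (k+2) * cfP α (k+1) + cfP α k : ℕ) : ℝ) = _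
        push_cast; ring
      have ha := key_a α h0 h1 hirr (k+1)
      have hPs1 : PP α (k+1) = PP α k * tt α (k+1) := Finset.prod_range_succ _ _
      have hPs2 : PP α (k+2) = PP α k * tt α (k+1) * tt α (k+2) := by
        rw [show PP α (k+2) = PP α (k+1) * tt α (k+2) from Finset.prod_range_succ _ _, hPs1]
      rw [hq, hp, hPs2]
      rw [hPs1] at ih2
      linear_combination (cfA α (k+2) : ℝ) * ih2 + ih1 - ((-1:ℝ)^k * PP α k) * ha
  exact (main k).1

lemma det (m : ℕ) : (cfP α (m+1) : ℤ) * cfQ α m - (cfP α m : ℤ) * cfQ α (m+1) = (-1)^m := by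
  induction m with
  | zero => simp [cfP, cfQ]
  | succ m ih =>
    have hq : (cfQ α (m+2) : ℤ) = (cfA α (m+2) : ℤ) * cfQ α (m+1) + cfQ α m := by
      show ((cfA α (m+2) * cfQ α (m+1) + cfQ α m : ℕ) : ℤ) = _
      push_cast; ring
    have hp : (cfP α (m+2) : ℤ) = (cfA α (m+2) : ℤ) * cfP α (m+1) + cfP α m := by
      show ((cfA α (m+2) * cfP α (m+1) + cfP α m : ℕ) : ℤ) = _
      push_cast; ring
    rw [hq, hp]
    linear_combination (-1 : ℤ) * ih

lemma cfQ_pos : ∀ m, 1 ≤ cfQ α m := by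
  have main : ∀ m, 1 ≤ cfQ α m ∧ 1 ≤ cfQ α (m+1) := by
    intro m; induction m with
    | zero => exact ⟨le_refl _, cfA_pos α h0 h1 hirr 0⟩
    | succ m ih =>
      obtain ⟨i1, i2⟩ := ih
      refine ⟨i2, ?_⟩
      show 1 ≤ cfA α (m+2) * cfQ α (m+1) + cfQ α m
      nlinarith [cfA_pos α h0 h1 hirr (m+1)]
  exact fun m => (main m).1

lemma cfQ_lt (m : ℕ) (hm : 1 ≤ m) : cfQ α m < cfQ α (m+1) := by
  obtain ⟨k, rfl⟩ := Nat.exists_eq_add_of_le hm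
  have h4 : 1 + k = k + 1 := by omega
  rw [h4]
  show cfQ α (k+1) < cfA α (k+2) * cfQ α (k+1) + cfQ α k
  have h2 := cfA_pos α h0 h1 hirr (k+1)
  have h3 := cfQ_pos α h0 h1 hirr k
  nlinarith

end CF

section CF2
variable (α : ℝ) (h0 : 0 < α) (h1 : α < 1) (hirr : Irrational α)
include h0 h1 hirr

lemma best (m : ℕ) (k l : ℤ) (hk1 : 1 ≤ k) (hk2 : k < (cfQ α (m+1) : ℤ))
    (hne : k ≠ (cfQ α m : ℤ) ∨ l ≠ (cfP α m : ℤ)) :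
    PP α m < |(k : ℝ) * α - l| := by
  set x : ℤ := (-1)^m * ((cfP α (m+1) : ℤ) * k - (cfQ α (m+1) : ℤ) * l) with hxdef
  set y : ℤ := (-1)^m * ((cfQ α m : ℤ) * l - (cfP α m : ℤ) * k) with hydef
  have hdet := det α h0 h1 hirr m
  have hs : ((-1:ℤ)^m) * ((-1)^m) = 1 := by
    rw [← pow_add]; exact Even.neg_one_pow ⟨m, rfl⟩
  have hk : x * (cfQ α m : ℤ) + y * (cfQ α (m+1) : ℤ) = k := by
    rw [hxdef, hydef]
    linear_combination ((-1:ℤ)^m * k) * hdet + k * hs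
  have hl : x * (cfP α m : ℤ) + y * (cfP α (m+1) : ℤ) = l := by
    rw [hxdef, hydef]
    linear_combination ((-1:ℤ)^m * l) * hdet + l * hs
  have hD := key α h0 h1 hirr m
  have hD' := key α h0 h1 hirr (m+1)
  have hkR : (x:ℝ) * (cfQ α m : ℝ) + (y:ℝ) * (cfQ α (m+1) : ℝ) = (k:ℝ) := by
    exact_mod_cast congrArg (Int.cast : ℤ → ℝ) hk
  have hlR : (x:ℝ) * (cfP α m : ℝ) + (y:ℝ) * (cfP α (m+1) : ℝ) = (l:ℝ) := by
    exact_mod_cast congrArg (Int.cast : ℤ → ℝ) hl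
  have hxy : (k:ℝ) * α - l
      = (x:ℝ) * ((-1)^m * PP α m) + (y:ℝ) * ((-1)^(m+1) * PP α (m+1)) := by
    linear_combination (-(α)) * hkR + hlR + (x:ℝ) * hD + (y:ℝ) * hD'
  have hPm := PP_pos α h0 h1 hirr m
  have hPm' := PP_pos α h0 h1 hirr (m+1)
  have hQm : (1:ℤ) ≤ (cfQ α m : ℤ) := by exact_mod_cast cfQ_pos α h0 h1 hirr m
  have hQm' : (1:ℤ) ≤ (cfQ α (m+1) : ℤ) := by exact_mod_cast cfQ_pos α h0 h1 hirr (m+1)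
  by_cases hy : y = 0
  · -- k = x * q m, l = x * p m
    rw [hy] at hk hl
    simp at hk hl
    have hx1 : 1 ≤ x := by nlinarith
    have hx2 : 2 ≤ x := by
      rcases lt_or_ge x 2 with h | h
      · have hxx : x = 1 := by omega
        rw [hxx, one_mul] at hk hl
        rcases hne with h' | h'
        · exact absurd hk.symm h'
        · exact absurd hl.symm h'
      · exact h
    have habs : |(k:ℝ) * α - l| = (x:ℝ) * PP α m := by
      rw [hxy, hy]
      push_cast
      rw [zero_mul, add_zero, ← mul_assoc, abs_mul, abs_mul, abs_pow, abs_neg, abs_one,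
        one_pow, mul_one, abs_of_nonneg hPm.le, abs_of_nonneg (by positivity : (0:ℝ) ≤ (x:ℝ) )]
    rw [habs]
    have hx' : (2:ℝ) ≤ (x:ℝ) := by exact_mod_cast hx2
    nlinarith
  · have hx0 : x ≠ 0 := by
      intro h
      rw [h, zero_mul, zero_add] at hk
      rcases lt_or_ge y 0 with h' | h'
      · nlinarith
      · have : 1 ≤ y := by omega
        nlinarith
    have hopp : (1 ≤ x ∧ y ≤ -1) ∨ (x ≤ -1 ∧ 1 ≤ y) := by
      rcases lt_or_ge 0 x with hx | hx
      · rcases lt_or_ge 0 y with hyy | hyy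
        · exfalso; nlinarith
        · exact Or.inl ⟨hx, by omega⟩
      · rcases lt_or_ge 0 y with hyy | hyy
        · exact Or.inr ⟨by omega, hyy⟩
        · exfalso; nlinarith
    have hrw : (x:ℝ) * ((-1)^m * PP α m) + (y:ℝ) * ((-1)^(m+1) * PP α (m+1))
        = (-1)^m * ((x:ℝ) * PP α m - (y:ℝ) * PP α (m+1)) := by
      rw [pow_succ]; ring
    have habs : PP α m + PP α (m+1) ≤ |(k:ℝ) * α - l| := by
      rw [hxy, hrw, abs_mul, abs_pow, abs_neg, abs_one, one_pow, one_mul]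
      rcases hopp with ⟨hx, hyy⟩ | ⟨hx, hyy⟩
      · refine le_abs.mpr (Or.inl ?_)
        have hx' : (1:ℝ) ≤ (x:ℝ) := by exact_mod_cast hx
        have hy' : (y:ℝ) ≤ -1 := by exact_mod_cast hyy
        nlinarith
      · refine le_abs.mpr (Or.inr ?_)
        have hx' : (x:ℝ) ≤ -1 := by exact_mod_cast hx
        have hy' : (1:ℝ) ≤ (y:ℝ) := by exact_mod_cast hyy
        nlinarith
    linarith

end CF2

section CF3
variable (α : ℝ) (h0 : 0 < α) (h1 : α < 1) (hirr : Irrational α)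
include h0 h1 hirr

lemma nint_lower (m : ℕ) (k : ℕ) (hk1 : 1 ≤ k) (hk2 : k < cfQ α (m+1))
    (hne : k ≠ cfQ α m) : PP α m < nint ((k:ℝ) * α) := by
  have hb := best α h0 h1 hirr m (k : ℤ) (round ((k:ℝ) * α))
    (by exact_mod_cast hk1) (by exact_mod_cast hk2)
    (Or.inl (by exact_mod_cast hne))
  have hcast : (((k:ℤ)):ℝ) = (k:ℝ) := by push_cast; ring
  rw [hcast] at hb
  exact hb

lemma nint_q (m : ℕ) (hm : 1 ≤ m) : nint ((cfQ α m : ℝ) * α) = PP α m := by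
  have hkey := key α h0 h1 hirr m
  have habs : |(cfQ α m : ℝ) * α - (cfP α m : ℝ)| = PP α m := by
    rw [hkey, abs_mul, abs_pow, abs_neg, abs_one, one_pow, one_mul,
      abs_of_nonneg (PP_pos α h0 h1 hirr m).le]
  have hle : nint ((cfQ α m : ℝ) * α) ≤ PP α m := by
    have := nint_le ((cfQ α m : ℝ) * α) ((cfP α m : ℤ))
    rw [show (((cfP α m : ℤ)):ℝ) = (cfP α m : ℝ) by push_cast; ring] at this
    linarith [habs ▸ this]
  have hge : PP α m ≤ nint ((cfQ α m : ℝ) * α) := by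
    rcases eq_or_ne (round ((cfQ α m : ℝ) * α)) ((cfP α m : ℤ)) with he | hne
    · have : nint ((cfQ α m : ℝ) * α) = |(cfQ α m : ℝ) * α - (cfP α m : ℝ)| := by
        rw [nint, he]; push_cast; ring_nf
      rw [this, habs]
    · have hb := best α h0 h1 hirr m ((cfQ α m : ℤ)) (round ((cfQ α m : ℝ) * α))
        (by exact_mod_cast cfQ_pos α h0 h1 hirr m)
        (by exact_mod_cast cfQ_lt α h0 h1 hirr m hm) (Or.inr hne)
      have : nint ((cfQ α m : ℝ) * α) = |(cfQ α m : ℝ) * α - round ((cfQ α m : ℝ) * α)| := rfl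
      rw [this]
      have hcast : ((((cfQ α m : ℤ)) : ℝ)) = (cfQ α m : ℝ) := by push_cast; ring
      rw [hcast] at hb
      linarith
  linarith

end CF3

/- The L_q distance for α = (α1, 1 - α1) is lqc q * nint ((j - 1) α1). -/
noncomputable def lqc (q : ℝ≥0∞) : ℝ := if q = ⊤ then 1 else (2:ℝ) ^ (1 / q.toReal)

lemma lqc_pos (q : ℝ≥0∞) : 0 < lqc q := by
  rw [lqc]; split
  · norm_num
  · exact Real.rpow_pos_of_pos two_pos _

lemma kronDist_eq (q : ℝ≥0∞) (hq : 1 ≤ q) (α1 : ℝ) (j : ℕ) :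
    kronDist q ![α1, 1 - α1] 1 j = lqc q * nint (((j:ℝ) - 1) * α1) := by
  set v : ℝ := nint (((j:ℝ) - 1) * α1) with hv
  have hc0 : nint (kron ![α1, 1-α1] 1 0 - kron ![α1, 1-α1] j 0) = v := by
    show nint ((1:ℕ) * α1 - (j:ℝ) * α1) = v
    rw [hv, show ((1:ℕ):ℝ) * α1 - (j:ℝ) * α1 = -(((j:ℝ) - 1) * α1) by push_cast; ring,
      nint_neg]
  have hc1 : nint (kron ![α1, 1-α1] 1 1 - kron ![α1, 1-α1] j 1) = v := by
    show nint ((1:ℕ) * (1 - α1) - (j:ℝ) * (1 - α1)) = v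
    have he : ((1:ℕ):ℝ) * (1 - α1) - (j:ℝ) * (1 - α1)
        = ((j:ℝ) - 1) * α1 + (((1 - (j:ℤ)) : ℤ) : ℝ) := by push_cast; ring
    rw [hv, he, nint_add_int]
  rw [kronDist, lqDist]
  split
  · rw [lqc]; simp only [if_pos ‹_›, one_mul]
    have : (fun i : Fin 2 => nint (kron ![α1, 1-α1] 1 i - kron ![α1, 1-α1] j i))
        = fun _ : Fin 2 => v := by
      funext c
      fin_cases c
      · exact hc0
      · exact hc1
    rw [this]
    exact ciSup_const
  · rename_i hne
    have hp1 : 1 ≤ q.toReal := by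
      have := ENNReal.toReal_mono hne hq
      simpa using this
    have hp0 : (0:ℝ) < q.toReal := by linarith
    have hvnn : 0 ≤ v := nint_nonneg _
    rw [lqc]; simp only [if_neg hne]
    rw [Fin.sum_univ_two, hc0, hc1]
    rw [show v ^ q.toReal + v ^ q.toReal = 2 * v ^ q.toReal by ring]
    rw [Real.mul_rpow (by norm_num) (Real.rpow_nonneg hvnn _)]
    congr 1
    rw [← Real.rpow_mul hvnn, mul_one_div_cancel hp0.ne', Real.rpow_one]

/-- For irrational `α_1 ∈ (1/2, 1)` with convergent denominators `(q_k)`,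
`α = (α_1, 1 - α_1)` and `1 ≤ q ≤ ∞`: for every `i ≥ 1` and every `n` with
`q_{i+1} + 1 ≤ n ≤ q_{i+2}`, one has `h_1(n) = q_{i+1}`. -/
theorem statement12 (α1 : ℝ) (hmem : α1 ∈ Set.Ioo (1/2 : ℝ) 1) (hirr : Irrational α1)
    (q : ℝ≥0∞) (hq : 1 ≤ q) (i : ℕ) (hi : 1 ≤ i) (n : ℕ)
    (hn1 : cfQ α1 (i + 1) + 1 ≤ n) (hn2 : n ≤ cfQ α1 (i + 2)) :
    hFun q ![α1, 1 - α1] n 1 = cfQ α1 (i + 1) := by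
  obtain ⟨hhalf, h1⟩ := hmem
  have h0 : 0 < α1 := by linarith
  set Q := cfQ α1 (i + 1) with hQ
  set u : ℕ → ℝ := fun m => nint (((m:ℝ) - 1) * α1) with hu
  have hcmp : ∀ a b : ℕ, (kronDist q ![α1, 1-α1] 1 a ≤ kronDist q ![α1, 1-α1] 1 b ↔
      u a ≤ u b) := by
    intro a b
    rw [kronDist_eq q hq, kronDist_eq q hq]
    exact mul_le_mul_iff_right₀ (lqc_pos q)
  have hQpos : 1 ≤ Q := cfQ_pos α1 h0 h1 hirr (i+1)
  have hF1 : u (Q + 1) = PP α1 (i+1) := by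
    simp only [hu]
    rw [show ((Q + 1 : ℕ):ℝ) - 1 = (Q:ℝ) by push_cast; ring, hQ]
    exact nint_q α1 h0 h1 hirr (i+1) (by omega)
  have hF2 : ∀ m : ℕ, 2 ≤ m → m ≤ n → m ≠ Q + 1 → PP α1 (i+1) < u m := by
    intro m hm2 hmn hmQ
    have hk1 : 1 ≤ m - 1 := by omega
    have hk2 : m - 1 < cfQ α1 (i + 2) := by
      have := cfQ_lt α1 h0 h1 hirr (i+1) (by omega)
      omega
    have hkne : m - 1 ≠ Q := by omega
    have := nint_lower α1 h0 h1 hirr (i+1) (m-1) hk1 hk2 hkne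
    have hcast : ((m:ℝ) - 1) = (((m - 1 : ℕ)):ℝ) := by
      have : ((m - 1 : ℕ):ℝ) = (m:ℝ) - 1 := by
        push_cast [Nat.cast_sub (by omega : 1 ≤ m)]; ring
      linarith [this]
    simp only [hu]
    simpa [hcast] using this
  have hset : {j : ℕ | j ∈ Finset.Icc 1 n ∧ j ≠ 1 ∧
      ∀ m ∈ Finset.Icc 1 n, m ≠ 1 →
        kronDist q ![α1, 1-α1] 1 j ≤ kronDist q ![α1, 1-α1] 1 m} = {Q + 1} := by
    ext j
    simp only [Set.mem_setOf_eq, Set.mem_singleton_iff]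
    constructor
    · rintro ⟨hj, hjne, hmin⟩
      obtain ⟨hj1, hjn⟩ := Finset.mem_Icc.mp hj
      by_contra hjQ
      have hj2 : 2 ≤ j := by omega
      have hQmem : Q + 1 ∈ Finset.Icc 1 n := Finset.mem_Icc.mpr ⟨by omega, hn1⟩
      have hQne : Q + 1 ≠ 1 := by omega
      have hle := (hcmp j (Q+1)).mp (hmin (Q+1) hQmem hQne)
      rw [hF1] at hle
      exact absurd hle (not_le.mpr (hF2 j hj2 hjn hjQ))
    · rintro rfl
      refine ⟨Finset.mem_Icc.mpr ⟨by omega, hn1⟩, by omega, ?_⟩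
      intro m hm hmne
      rw [hcmp]
      obtain ⟨hm1, hmn⟩ := Finset.mem_Icc.mp hm
      rcases eq_or_ne m (Q + 1) with rfl | hmQ
      · exact le_refl _
      · rw [hF1]
        exact (hF2 m (by omega) hmn hmQ).le
  have hnn : nnIndex q ![α1, 1-α1] n 1 = Q + 1 := by
    rw [nnIndex, hset]
    exact csSup_singleton _
  rw [hFun, hnn]
  simp [Nat.dist]
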